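/- arXiv:2312.09497 — 2 statements merged into one kernel-verified Lean document; each statement's English description precedes it below -/
import Mathlib

section
/- For every α ∈ (0,1), both domains Ω⁺ and Ω⁻ over the Cantor-cuspidal graph satisfy the segment condition: for every boundary point x ∈ ∂Ω there exist a neighborhood U_x of x and a nonzero vector y_x ∈ ℝ² such that for every z ∈ closure(Ω) ∩ U_x and every t ∈ (0,1), the point z + t·y_x belongs to Ω. -/
open MeasureTheory Set Metric Filter Topology
open scoped ENNReal NNReal

noncomputable section

/-- The cusp function `ψ(x) = dist(x, C)^α` on `(0,1)`, zero elsewhere; here `C = cantorSet`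
is Mathlib's classical ternary Cantor set. -/
def psiC (α : ℝ) (x : ℝ) : ℝ :=
  if x ∈ Ioo (0 : ℝ) 1 then infDist x cantorSet ^ α else 0

/-- The domain above the Cantor-cuspidal graph. -/
def OmegaPlus (α : ℝ) : Set (ℝ × ℝ) := {x | psiC α x.1 < x.2}

/-- The domain below the Cantor-cuspidal graph. -/
def OmegaMinus (α : ℝ) : Set (ℝ × ℝ) := {x | x.2 < psiC α x.1}

/-- The Cantor-cuspidal graph `Γ`. -/
def graphC (α : ℝ) : Set (ℝ × ℝ) := {x | x.2 = psiC α x.1}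

/-- A domain `Ω ⊂ ℝ²` satisfies the segment condition if every boundary point has a
neighborhood `U` and a nonzero vector `y` such that `z + t • y ∈ Ω` for every
`z ∈ closure Ω ∩ U` and every `0 < t < 1`. -/
def SegmentCond (Ω : Set (ℝ × ℝ)) : Prop :=
  ∀ x ∈ frontier Ω, ∃ U ∈ 𝓝 x, ∃ y : ℝ × ℝ, y ≠ 0 ∧
    ∀ z ∈ closure Ω ∩ U, ∀ t : ℝ, 0 < t → t < 1 → z + t • y ∈ Ω

lemma one_mem_preCantorSet' (n : ℕ) : (1:ℝ) ∈ preCantorSet n := by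
  induction n with
  | zero => simp [preCantorSet]
  | succ n ih => exact Or.inr ⟨1, ih, by norm_num⟩

lemma one_mem_cantorSet' : (1:ℝ) ∈ cantorSet := Set.mem_iInter.mpr one_mem_preCantorSet'

lemma continuous_psiC (α : ℝ) (hα : 0 < α) : Continuous (psiC α) := by
  set f : ℝ → ℝ := fun x => infDist x cantorSet ^ α with hfdef
  have hf : Continuous f := (continuous_infDist_pt _).rpow_const (fun _ => Or.inr hα.le)
  have hψ_nonneg : ∀ y : ℝ, 0 ≤ psiC α y := by
    intro y
    unfold psiC
    split
    · exact Real.rpow_nonneg infDist_nonneg _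
    · exact le_refl 0
  have hψ_le : ∀ y : ℝ, psiC α y ≤ f y := by
    intro y
    unfold psiC
    split
    · exact le_refl _
    · exact Real.rpow_nonneg infDist_nonneg _
  rw [continuous_iff_continuousAt]
  intro x
  by_cases h1 : x ∈ Ioo (0:ℝ) 1
  · exact hf.continuousAt.congr
      (Filter.eventuallyEq_of_mem (isOpen_Ioo.mem_nhds h1)
        (fun y hy => by simp [psiC, hy, hfdef])).symm
  by_cases h2 : x ∈ Icc (0:ℝ) 1
  · -- x = 0 or x = 1, so infDist x cantorSet = 0
    have hx : x ∈ cantorSet := by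
      rcases h2 with ⟨h2a, h2b⟩
      rcases eq_or_lt_of_le h2a with h | h
      · rw [← h]; exact zero_mem_cantorSet
      rcases eq_or_lt_of_le h2b with h' | h'
      · rw [h']; exact one_mem_cantorSet'
      exact absurd ⟨h, h'⟩ h1
    have hfx : f x = 0 := by
      simp [hfdef, infDist_zero_of_mem hx, Real.zero_rpow hα.ne']
    have hψx : psiC α x = 0 := by simp [psiC, h1]
    have : Filter.Tendsto (psiC α) (𝓝 x) (𝓝 0) :=
      squeeze_zero hψ_nonneg hψ_le (hfx ▸ hf.continuousAt)
    simpa [ContinuousAt, hψx] using this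
  · have h2' : (Icc (0:ℝ) 1)ᶜ ∈ 𝓝 x := isClosed_Icc.isOpen_compl.mem_nhds h2
    refine (continuousAt_const : ContinuousAt (fun _ : ℝ => (0:ℝ)) x).congr
      ((Filter.eventuallyEq_of_mem h2' (fun y hy => ?_) : psiC α =ᶠ[𝓝 x] fun _ => (0:ℝ)).symm)
    have : y ∉ Ioo (0:ℝ) 1 := fun h => hy (Ioo_subset_Icc_self h)
    simp [psiC, this]

/-- Both `Ω⁺` and `Ω⁻` satisfy the segment condition. -/
theorem omega_segment_condition (α : ℝ) (hα₀ : 0 < α) (hα₁ : α < 1) :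
    SegmentCond (OmegaPlus α) ∧ SegmentCond (OmegaMinus α) := by
  have hc : Continuous (psiC α) := continuous_psiC α hα₀
  constructor
  · intro x _
    refine ⟨Set.univ, Filter.univ_mem, (0, 1), by simp, ?_⟩
    rintro z ⟨hz, -⟩ t ht0 ht1
    have hcl : closure (OmegaPlus α) ⊆ {x : ℝ × ℝ | psiC α x.1 ≤ x.2} := by
      refine closure_minimal ?_ (isClosed_le (hc.comp continuous_fst) continuous_snd)
      exact fun w hw => le_of_lt (show psiC α w.1 < w.2 from hw)
    have hz' : psiC α z.1 ≤ z.2 := hcl hz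
    show psiC α (z + t • ((0:ℝ), (1:ℝ))).1 < (z + t • ((0:ℝ), (1:ℝ))).2
    simp only [Prod.fst_add, Prod.snd_add, Prod.smul_fst, Prod.smul_snd, smul_eq_mul,
      mul_zero, mul_one, add_zero]
    linarith
  · intro x _
    refine ⟨Set.univ, Filter.univ_mem, (0, -1), by simp, ?_⟩
    rintro z ⟨hz, -⟩ t ht0 ht1
    have hcl : closure (OmegaMinus α) ⊆ {x : ℝ × ℝ | x.2 ≤ psiC α x.1} := by
      refine closure_minimal ?_ (isClosed_le continuous_snd (hc.comp continuous_fst))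
      exact fun w hw => le_of_lt (show w.2 < psiC α w.1 from hw)
    have hz' : z.2 ≤ psiC α z.1 := hcl hz
    show (z + t • ((0:ℝ), (-1:ℝ))).2 < psiC α (z + t • ((0:ℝ), (-1:ℝ))).1
    simp only [Prod.fst_add, Prod.snd_add, Prod.smul_fst, Prod.smul_snd, smul_eq_mul,
      mul_zero, add_zero]
    linarith
end
end

section
/- Let (log 2)/(2 log 3) < α < 1, and let p, q satisfy ((1+α) − (log 2)/(log 3))/(2α − (log 2)/(log 3)) < p < ∞ and 1 ≤ q < ((1+α) − (log 2)/(log 3))·p / ((1+α) − (log 2)/(log 3) + (1−α)p). Then the integral over ⋃_{n≥1} ⋃_{k=1}^{2^{n−1}} R⁻_{n,k} of dist(x₁, C)^{(α−1)·pq/(p−q)} dx₁ dx₂ is finite. -/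
open MeasureTheory Set Metric Filter Topology
open scoped ENNReal NNReal

noncomputable section

/-- Left endpoints of the `2^n` level-`n` closed intervals of the ternary Cantor
construction (in bit-reversed order). -/
def lep : ℕ → ℕ → ℝ
  | 0, _ => 0
  | n + 1, k => lep n (k / 2) + ((k % 2 : ℕ) : ℝ) * 2 / 3 ^ (n + 1)

/-- The removed middle-third open interval `I_{n+1}^{k+1}` (here `n ≥ 0`, `k < 2 ^ n`):
the open middle third of the level-`n` closed interval `[lep n k, lep n k + 3⁻ⁿ]`. -/
def Ink (n k : ℕ) : Set ℝ :=
  Ioo (lep n k + 1 / 3 ^ (n + 1)) (lep n k + 2 / 3 ^ (n + 1))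

/-- The set `R⁺_{n,k}` above the graph over `I_{n+1}^{k+1}`. -/
def RP (α : ℝ) (n k : ℕ) : Set (ℝ × ℝ) :=
  {x | x.1 ∈ Ink n k ∧ psiC α x.1 < x.2 ∧ x.2 < 2 * psiC α x.1}

/-- The set `R⁻_{n,k}` below the graph over `I_{n+1}^{k+1}`. -/
def RM (α : ℝ) (n k : ℕ) : Set (ℝ × ℝ) :=
  {x | x.1 ∈ Ink n k ∧ -(2 * psiC α x.1) < x.2 ∧ x.2 < psiC α x.1}

/-- The union `⋃_{n,k} R⁺_{n,k}`. -/
def RPall (α : ℝ) : Set (ℝ × ℝ) := ⋃ n, ⋃ k ∈ {k : ℕ | k < 2 ^ n}, RP α n k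

/-- The union `⋃_{n,k} R⁻_{n,k}`. -/
def RMall (α : ℝ) : Set (ℝ × ℝ) := ⋃ n, ⋃ k ∈ {k : ℕ | k < 2 ^ n}, RM α n k


lemma lep_zero (k : ℕ) : lep 0 k = 0 := rfl

lemma lep_succ (n k : ℕ) :
    lep (n + 1) k = lep n (k / 2) + ((k % 2 : ℕ) : ℝ) * 2 / 3 ^ (n + 1) := rfl

lemma lep_nonneg (n k : ℕ) : 0 ≤ lep n k := by
  induction n generalizing k with
  | zero => simp [lep_zero]
  | succ n ih =>
    rw [lep_succ]
    have : (0:ℝ) ≤ ((k % 2 : ℕ) : ℝ) * 2 / 3 ^ (n + 1) := by positivity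
    linarith [ih (k / 2)]

lemma lep_le (n k : ℕ) (h : k < 2 ^ n) : lep n k ≤ 1 - ((3:ℝ) ^ n)⁻¹ := by
  induction n generalizing k with
  | zero => simp [lep_zero]
  | succ n ih =>
    rw [lep_succ]
    have hk2 : k / 2 < 2 ^ n := Nat.div_lt_of_lt_mul (by rw [two_mul] at *; omega)
    have h1 := ih (k / 2) hk2
    have h2 : ((k % 2 : ℕ) : ℝ) ≤ 1 := by
      have : k % 2 ≤ 1 := Nat.le_of_lt_succ (Nat.mod_lt k (by norm_num))
      exact_mod_cast this
    have h3 : (0:ℝ) < 3 ^ (n+1) := by positivity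
    have h4 : ((k % 2 : ℕ) : ℝ) * 2 / 3 ^ (n + 1) ≤ 2 / 3 ^ (n+1) := by
      apply div_le_div_of_nonneg_right ?_ h3.le
      nlinarith
    have h5 : ((3:ℝ) ^ (n+1))⁻¹ = ((3:ℝ)^n)⁻¹ / 3 := by
      rw [pow_succ]; field_simp
    rw [h5]
    have h6 : ((3:ℝ)^n)⁻¹ ≥ ((3:ℝ)^n)⁻¹ := le_refl _
    have h7 : (0:ℝ) < (3:ℝ)^n := by positivity
    have : (2:ℝ) / 3 ^ (n+1) = (2/3) * ((3:ℝ)^n)⁻¹ := by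
      rw [pow_succ]; field_simp
    rw [this] at h4
    nlinarith [inv_pos.mpr h7]

lemma lep_succ_left (n k : ℕ) (h : k < 2 ^ n) : lep (n + 1) k = lep n k / 3 := by
  induction n generalizing k with
  | zero =>
    interval_cases k
    simp [lep_succ, lep_zero]
  | succ n ih =>
    have hk2 : k / 2 < 2 ^ n := Nat.div_lt_of_lt_mul (by rw [two_mul] at *; omega)
    rw [lep_succ, ih (k / 2) hk2, lep_succ n k]
    rw [pow_succ]
    ring

lemma lep_succ_right (n k : ℕ) (h : k < 2 ^ n) :
    lep (n + 1) (2 ^ n + k) = (2 + lep n k) / 3 := by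
  induction n generalizing k with
  | zero =>
    interval_cases k
    norm_num [lep_succ, lep_zero]
  | succ n ih =>
    have hk2 : k / 2 < 2 ^ n := Nat.div_lt_of_lt_mul (by rw [two_mul] at *; omega)
    have hdiv : (2 ^ (n+1) + k) / 2 = 2 ^ n + k / 2 := by
      have : 2 ^ (n+1) + k = 2 * 2 ^ n + k := by ring
      rw [this, Nat.mul_add_div (by norm_num)]
    have hmod : (2 ^ (n+1) + k) % 2 = k % 2 := by
      omega
    rw [lep_succ, hdiv, hmod, ih (k/2) hk2, lep_succ n k, pow_succ]
    ring

lemma preCantorSet_subset_unit (n : ℕ) : preCantorSet n ⊆ Icc 0 1 := by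
  induction n with
  | zero => simp
  | succ n ih =>
    rintro x (⟨y, hy, rfl⟩ | ⟨y, hy, rfl⟩) <;>
      obtain ⟨h0, h1⟩ := ih hy <;> constructor <;> simp only [] <;> linarith

lemma Ink_succ_left (n k : ℕ) (h : k < 2 ^ n) (x : ℝ) (hx : x ∈ Ink (n+1) k) :
    3 * x ∈ Ink n k := by
  obtain ⟨h1, h2⟩ := hx
  rw [lep_succ_left n k h] at h1 h2
  constructor
  · have : (1:ℝ) / 3 ^ (n + 1 + 1) = (1 / 3 ^ (n+1)) / 3 := by rw [pow_succ]; ring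
    rw [this] at h1; linarith
  · have : (2:ℝ) / 3 ^ (n + 1 + 1) = (2 / 3 ^ (n+1)) / 3 := by rw [pow_succ]; ring
    rw [this] at h2; linarith

lemma Ink_succ_right (n k : ℕ) (h : k < 2 ^ n) (x : ℝ) (hx : x ∈ Ink (n+1) (2^n + k)) :
    3 * x - 2 ∈ Ink n k := by
  obtain ⟨h1, h2⟩ := hx
  rw [lep_succ_right n k h] at h1 h2
  constructor
  · have : (1:ℝ) / 3 ^ (n + 1 + 1) = (1 / 3 ^ (n+1)) / 3 := by rw [pow_succ]; ring
    rw [this] at h1; linarith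
  · have : (2:ℝ) / 3 ^ (n + 1 + 1) = (2 / 3 ^ (n+1)) / 3 := by rw [pow_succ]; ring
    rw [this] at h2; linarith

lemma Ink_notMem_preCantorSet (n : ℕ) : ∀ k < 2 ^ n, ∀ x ∈ Ink n k, x ∉ preCantorSet (n+1) := by
  induction n with
  | zero =>
    intro k hk x hx hmem
    interval_cases k
    obtain ⟨h1, h2⟩ := hx
    rw [lep_zero] at h1 h2
    norm_num at h1 h2
    rcases hmem with ⟨y, hy, rfl⟩ | ⟨y, hy, rfl⟩ <;>
      obtain ⟨hy0, hy1⟩ := preCantorSet_subset_unit 0 hy <;> simp only [] at h1 h2 <;> linarith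
  | succ n ih =>
    intro k hk x hx hmem
    have h3n : (0:ℝ) < 3 ^ n := by positivity
    rcases Nat.lt_or_ge k (2 ^ n) with hk' | hk'
    · -- left half: Ink (n+1) k ⊆ (0, 1/3)
      have hup : x < 1/3 := by
        obtain ⟨_, h2⟩ := hx
        rw [lep_succ_left n k hk'] at h2
        have := lep_le n k hk'
        have h2' : (2:ℝ) / 3 ^ (n + 1 + 1) = (2 / (3 * 3 ^ n)) / 3 := by
          rw [pow_succ, pow_succ]; ring
        rw [h2'] at h2
        have e1 : (2:ℝ) / (3 * 3 ^ n) / 3 = 2 * (3 ^ n)⁻¹ / 9 := by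
          field_simp
          ring
        rw [e1] at h2
        have := inv_pos.mpr h3n
        linarith
      rcases hmem with ⟨y, hy, rfl⟩ | ⟨y, hy, rfl⟩
      · refine ih k hk' y ?_ hy
        have := Ink_succ_left n k hk' _ hx
        rwa [show 3 * (y / 3) = y by ring] at this
      · obtain ⟨hy0, hy1⟩ := preCantorSet_subset_unit _ hy
        simp only [] at hup; linarith
    · -- right half
      obtain ⟨j, rfl⟩ : ∃ j, k = 2 ^ n + j := ⟨k - 2^n, by omega⟩
      have hj : j < 2 ^ n := by
        have : 2 ^ (n+1) = 2 ^ n + 2 ^ n := by ring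
        omega
      have hlow : 2/3 < x := by
        obtain ⟨h1, _⟩ := hx
        rw [lep_succ_right n j hj] at h1
        have := lep_nonneg n j
        have hp : (0:ℝ) < 1 / 3 ^ (n + 1 + 1) := by positivity
        linarith
      rcases hmem with ⟨y, hy, rfl⟩ | ⟨y, hy, rfl⟩
      · obtain ⟨hy0, hy1⟩ := preCantorSet_subset_unit _ hy
        simp only [] at hlow; linarith
      · refine ih j hj y ?_ hy
        have := Ink_succ_right n j hj _ hx
        rwa [show 3 * ((2 + y) / 3) - 2 = y by ring] at this

lemma Ink_notMem_cantorSet (n k : ℕ) (h : k < 2 ^ n) (x : ℝ) (hx : x ∈ Ink n k) :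
    x ∉ cantorSet := fun hc =>
  Ink_notMem_preCantorSet n k h x hx (Set.mem_iInter.mp hc (n+1))

lemma Ink_subset_Ioo (n k : ℕ) (h : k < 2 ^ n) : Ink n k ⊆ Ioo 0 1 := by
  intro x ⟨h1, h2⟩
  have h0 := lep_nonneg n k
  have hle := lep_le n k h
  have h3n : (0:ℝ) < 3 ^ n := by positivity
  constructor
  · have : (0:ℝ) < 1 / 3 ^ (n+1) := by positivity
    linarith
  · have : (2:ℝ) / 3 ^ (n+1) < (3 ^ n)⁻¹ := by
      rw [pow_succ, div_lt_iff₀ (by positivity), inv_eq_one_div]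
      field_simp
      norm_num
    linarith


lemma cantorSet_nonempty : cantorSet.Nonempty := ⟨0, zero_mem_cantorSet⟩

lemma infDist_cantor_le_one {x : ℝ} (hx : x ∈ Ioo (0:ℝ) 1) : infDist x cantorSet ≤ 1 := by
  have := infDist_le_dist_of_mem (zero_mem_cantorSet) (x := x)
  rw [Real.dist_eq] at this
  rw [abs_of_pos (by linarith [hx.1])] at this
  · linarith [hx.2]

lemma infDist_cantor_pos {n k : ℕ} (hk : k < 2 ^ n) {x : ℝ} (hx : x ∈ Ink n k) :
    0 < infDist x cantorSet :=
  (isClosed_cantorSet.notMem_iff_infDist_pos cantorSet_nonempty).1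
    (Ink_notMem_cantorSet n k hk x hx)

lemma min_le_infDist_cantor {n k : ℕ} (hk : k < 2 ^ n) {x : ℝ} (hx : x ∈ Ink n k) :
    min (x - (lep n k + 1 / 3 ^ (n + 1))) ((lep n k + 2 / 3 ^ (n + 1)) - x)
      ≤ infDist x cantorSet := by
  have := cantorSet_nonempty.to_subtype
  rw [infDist_eq_iInf]
  apply le_ciInf
  rintro ⟨y, hy⟩
  have hyn : y ∉ Ink n k := fun h => Ink_notMem_cantorSet n k hk y h hy
  rw [Ink, mem_Ioo, not_and_or, not_lt, not_lt] at hyn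
  rw [Real.dist_eq]
  rcases hyn with h | h
  · calc min (x - (lep n k + 1 / 3 ^ (n + 1))) ((lep n k + 2 / 3 ^ (n + 1)) - x)
        ≤ x - (lep n k + 1 / 3 ^ (n + 1)) := min_le_left _ _
      _ ≤ x - y := by linarith
      _ ≤ |x - y| := le_abs_self _
  · calc min (x - (lep n k + 1 / 3 ^ (n + 1))) ((lep n k + 2 / 3 ^ (n + 1)) - x)
        ≤ (lep n k + 2 / 3 ^ (n + 1)) - x := min_le_right _ _
      _ ≤ -(x - y) := by linarith
      _ ≤ |x - y| := neg_le_abs _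

lemma measurable_psiC (α : ℝ) : Measurable (psiC α) := by
  unfold psiC
  apply Measurable.ite measurableSet_Ioo ?_ measurable_const
  fun_prop

lemma measurableSet_RM (α : ℝ) (n k : ℕ) : MeasurableSet (RM α n k) := by
  have h1 : MeasurableSet {x : ℝ × ℝ | x.1 ∈ Ink n k} :=
    measurable_fst measurableSet_Ioo
  have h2 : MeasurableSet {x : ℝ × ℝ | -(2 * psiC α x.1) < x.2} :=
    measurableSet_lt ((((measurable_psiC α).comp measurable_fst).const_mul 2).neg) measurable_snd
  have h3 : MeasurableSet {x : ℝ × ℝ | x.2 < psiC α x.1} :=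
    measurableSet_lt measurable_snd ((measurable_psiC α).comp measurable_fst)
  have : RM α n k = {x : ℝ × ℝ | x.1 ∈ Ink n k} ∩ ({x | -(2 * psiC α x.1) < x.2} ∩ {x | x.2 < psiC α x.1}) := by
    ext x; exact ⟨fun ⟨a,b,c⟩ => ⟨a,b,c⟩, fun ⟨a,b,c⟩ => ⟨a,b,c⟩⟩
  rw [this]
  exact h1.inter (h2.inter h3)

lemma slice_bound (α γ : ℝ) (n k : ℕ) :
    (∫⁻ x in RM α n k, ENNReal.ofReal (infDist x.1 cantorSet ^ γ)) ≤
    ∫⁻ x₁ in Ink n k,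
      ENNReal.ofReal (infDist x₁ cantorSet ^ γ) * ENNReal.ofReal (3 * psiC α x₁) := by
  set g : ℝ → ℝ≥0∞ := fun x₁ => ENNReal.ofReal (infDist x₁ cantorSet ^ γ) with hg
  have hgm : Measurable g := by fun_prop
  have hRM := measurableSet_RM α n k
  have hInk : MeasurableSet (Ink n k) := measurableSet_Ioo
  rw [← lintegral_indicator hRM, ← lintegral_indicator hInk]
  rw [MeasureTheory.Measure.volume_eq_prod,
    lintegral_prod (fun z => (RM α n k).indicator
        (fun x => ENNReal.ofReal (infDist x.1 cantorSet ^ γ)) z)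
      (((by fun_prop : Measurable fun x : ℝ × ℝ => ENNReal.ofReal
        (infDist x.1 cantorSet ^ γ)).indicator hRM).aemeasurable)]
  apply lintegral_mono
  intro x₁
  have hinner : (fun x₂ : ℝ => (RM α n k).indicator
        (fun x => ENNReal.ofReal (infDist x.1 cantorSet ^ γ)) (x₁, x₂))
      = (Prod.mk x₁ ⁻¹' RM α n k).indicator
        (fun _ => ENNReal.ofReal (infDist x₁ cantorSet ^ γ)) := by
    funext x₂
    rfl
  dsimp only
  rw [hinner, lintegral_indicator (hRM.preimage measurable_prodMk_left), setLIntegral_const]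
  by_cases hx : x₁ ∈ Ink n k
  · rw [Set.indicator_of_mem hx]
    have hsub : Prod.mk x₁ ⁻¹' RM α n k ⊆ Ioo (-(2 * psiC α x₁)) (psiC α x₁) :=
      fun x₂ h => ⟨h.2.1, h.2.2⟩
    calc ENNReal.ofReal (infDist x₁ cantorSet ^ γ) * volume (Prod.mk x₁ ⁻¹' RM α n k)
        ≤ ENNReal.ofReal (infDist x₁ cantorSet ^ γ) *
            volume (Ioo (-(2 * psiC α x₁)) (psiC α x₁)) := by
          exact mul_le_mul_right (measure_mono hsub) _
      _ = ENNReal.ofReal (infDist x₁ cantorSet ^ γ) * ENNReal.ofReal (3 * psiC α x₁) := by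
          rw [Real.volume_Ioo]
          congr 1
          ring_nf
  · have hempty : Prod.mk x₁ ⁻¹' RM α n k = ∅ := by
      ext x₂; simp only [Set.mem_preimage, Set.mem_empty_iff_false, iff_false]
      intro h; exact hx h.1
    rw [hempty, Set.indicator_of_notMem hx]
    simp

lemma Ink_lintegral_bound (α γ β : ℝ) (hβ : β = γ + α) (hβ1 : -1 < β)
    (n k : ℕ) (hk : k < 2 ^ n) :
    (∫⁻ x₁ in Ink n k,
        ENNReal.ofReal (infDist x₁ cantorSet ^ γ) * ENNReal.ofReal (3 * psiC α x₁))
      ≤ ENNReal.ofReal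
          (6 / (β + 1) * ((1/3 : ℝ) ^ (n+1)) ^ (β + 1) + 3 * (1/3 : ℝ) ^ (n+1)) := by
  have hβ1' : (0:ℝ) < β + 1 := by linarith
  have hxIoo := Ink_subset_Ioo n k hk
  set A := lep n k + 1 / 3 ^ (n + 1) with hA
  set B := lep n k + 2 / 3 ^ (n + 1) with hB
  have h3p : (0:ℝ) < 3 ^ (n+1) := by positivity
  have hBA : B - A = (1/3 : ℝ) ^ (n + 1) := by
    rw [hA, hB, div_pow, one_pow]
    ring
  have hAB : A < B := by
    rw [hA, hB]
    have : (1:ℝ) / 3 ^ (n+1) < 2 / 3 ^ (n+1) := by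
      rw [div_lt_div_iff_of_pos_right h3p]
      norm_num
    linarith
  have hInkIoo : Ink n k = Ioo A B := rfl
  set F : ℝ → ℝ := fun x => 3 * ((x - A) ^ β + (B - x) ^ β + 1) with hF
  -- pointwise bound
  have hpt : ∀ x ∈ Ink n k,
      ENNReal.ofReal (infDist x cantorSet ^ γ) * ENNReal.ofReal (3 * psiC α x)
        ≤ ENNReal.ofReal (F x) := by
    intro x hx
    have hx' : A < x ∧ x < B := hx
    obtain ⟨hx1, hx2⟩ := hx'
    have hd : 0 < infDist x cantorSet := infDist_cantor_pos hk hx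
    have hψ : psiC α x = infDist x cantorSet ^ α := if_pos (hxIoo hx)
    rw [← ENNReal.ofReal_mul (Real.rpow_nonneg hd.le γ)]
    apply ENNReal.ofReal_le_ofReal
    have hprod : infDist x cantorSet ^ γ * (3 * psiC α x)
        = 3 * infDist x cantorSet ^ β := by
      rw [hψ, hβ, Real.rpow_add hd]
      ring
    rw [hprod]
    show 3 * infDist x cantorSet ^ β ≤ 3 * ((x - A) ^ β + (B - x) ^ β + 1)
    have h1 : (0:ℝ) ≤ (x - A) ^ β := Real.rpow_nonneg (by linarith) β
    have h2 : (0:ℝ) ≤ (B - x) ^ β := Real.rpow_nonneg (by linarith) β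
    have key : infDist x cantorSet ^ β ≤ (x - A) ^ β + (B - x) ^ β + 1 := by
      rcases le_or_gt 0 β with hb | hb
      · have : infDist x cantorSet ^ β ≤ 1 :=
          Real.rpow_le_one hd.le (infDist_cantor_le_one (hxIoo hx)) hb
        linarith
      · have hm := min_le_infDist_cantor hk hx
        have hmpos : 0 < min (x - A) (B - x) := lt_min (by linarith) (by linarith)
        have hle : infDist x cantorSet ^ β ≤ (min (x - A) (B - x)) ^ β :=
          Real.rpow_le_rpow_of_nonpos hmpos hm hb.le
        rcases min_cases (x - A) (B - x) with ⟨he, _⟩ | ⟨he, _⟩ <;> rw [he] at hle <;> linarith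
    linarith
  -- integrability
  have i1 : IntervalIntegrable (fun x => (x - A) ^ β) volume A B := by
    have := (intervalIntegral.intervalIntegrable_rpow' hβ1 (a := 0) (b := B - A)).comp_sub_right A
    simpa using this
  have i2 : IntervalIntegrable (fun x => (B - x) ^ β) volume A B := by
    have := (intervalIntegral.intervalIntegrable_rpow' hβ1 (a := B - A) (b := B - B)).comp_sub_left B
    simpa using this
  have iF : IntegrableOn F (Ioo A B) := by
    have j1 : IntegrableOn (fun x => (x - A) ^ β) (Ioo A B) :=
      ((intervalIntegrable_iff_integrableOn_Ioc_of_le hAB.le).mp i1).mono_set Ioo_subset_Ioc_self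
    have j2 : IntegrableOn (fun x => (B - x) ^ β) (Ioo A B) :=
      ((intervalIntegrable_iff_integrableOn_Ioc_of_le hAB.le).mp i2).mono_set Ioo_subset_Ioc_self
    have j3 : IntegrableOn (fun _ : ℝ => (1:ℝ)) (Ioo A B) :=
      integrableOn_const measure_Ioo_lt_top.ne
    exact (((j1.add j2).add j3).const_mul 3)
  have hFnn : 0 ≤ᵐ[volume.restrict (Ioo A B)] F := by
    apply ae_restrict_of_forall_mem measurableSet_Ioo
    intro x hx
    have h1 : (0:ℝ) ≤ (x - A) ^ β := Real.rpow_nonneg (by linarith [hx.1]) β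
    have h2 : (0:ℝ) ≤ (B - x) ^ β := Real.rpow_nonneg (by linarith [hx.2]) β
    simp only [hF, Pi.zero_apply]
    nlinarith
  calc (∫⁻ x₁ in Ink n k,
        ENNReal.ofReal (infDist x₁ cantorSet ^ γ) * ENNReal.ofReal (3 * psiC α x₁))
      ≤ ∫⁻ x₁ in Ink n k, ENNReal.ofReal (F x₁) := by
        apply setLIntegral_mono (by fun_prop) hpt
    _ = ENNReal.ofReal (∫ x in Ioo A B, F x) := by
        rw [hInkIoo, ofReal_integral_eq_lintegral_ofReal iF hFnn]
    _ ≤ ENNReal.ofReal (6 / (β + 1) * ((1/3 : ℝ) ^ (n+1)) ^ (β + 1) + 3 * (1/3 : ℝ) ^ (n+1)) := by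
        apply ENNReal.ofReal_le_ofReal
        have hIoo : ∫ x in Ioo A B, F x = ∫ x in A..B, F x := by
          rw [intervalIntegral.integral_of_le hAB.le, integral_Ioc_eq_integral_Ioo]
        have hI1 : ∫ x in A..B, (x - A) ^ β = (B - A) ^ (β + 1) / (β + 1) := by
          rw [intervalIntegral.integral_comp_sub_right (fun x => x ^ β) A, sub_self,
            integral_rpow (Or.inl hβ1), Real.zero_rpow (by linarith : β + 1 ≠ 0), sub_zero]
        have hI2 : ∫ x in A..B, (B - x) ^ β = (B - A) ^ (β + 1) / (β + 1) := by
          rw [intervalIntegral.integral_comp_sub_left (fun x => x ^ β) B, sub_self,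
            integral_rpow (Or.inl hβ1), Real.zero_rpow (by linarith : β + 1 ≠ 0), sub_zero]
        have hsum : ∫ x in A..B, F x
            = 3 * (((B - A) ^ (β + 1) / (β + 1) + (B - A) ^ (β + 1) / (β + 1)) + (B - A)) := by
          rw [hF]
          rw [intervalIntegral.integral_const_mul]
          rw [intervalIntegral.integral_add (i1.add i2) intervalIntegrable_const,
            intervalIntegral.integral_add i1 i2, hI1, hI2]
          simp [smul_eq_mul]
        rw [hIoo, hsum, ← hBA]
        have : (0:ℝ) ≤ (B - A) ^ (β + 1) := Real.rpow_nonneg (by linarith) _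
        calc 3 * (((B - A) ^ (β + 1) / (β + 1) + (B - A) ^ (β + 1) / (β + 1)) + (B - A))
            = 6 / (β + 1) * (B - A) ^ (β + 1) + 3 * (B - A) := by
              field_simp
              ring
          _ ≤ 6 / (β + 1) * (B - A) ^ (β + 1) + 3 * (B - A) := le_refl _

lemma RMall_eq (α : ℝ) :
    RMall α = ⋃ p : ℕ × ℕ, (if p.2 < 2 ^ p.1 then RM α p.1 p.2 else ∅) := by
  ext x
  simp only [RMall, mem_iUnion, mem_setOf_eq, exists_prop]
  constructor
  · rintro ⟨n, k, hk, hx⟩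
    exact ⟨(n, k), by simp only [if_pos hk]; exact hx⟩
  · rintro ⟨⟨n, k⟩, hx⟩
    by_cases hk : k < 2 ^ n
    · rw [if_pos hk] at hx; exact ⟨n, k, hk, hx⟩
    · rw [if_neg hk] at hx; exact absurd hx (notMem_empty x)

theorem main_bound (α γ β : ℝ) (hβ : β = γ + α) (hβ1 : -1 < β)
    (hlb : Real.log 2 / Real.log 3 < β + 1) :
    (∫⁻ x in RMall α, ENNReal.ofReal (infDist x.1 cantorSet ^ γ)) < ⊤ := by
  have hβ1' : (0:ℝ) < β + 1 := by linarith
  set r : ℝ := (1/3 : ℝ) ^ (β + 1) with hr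
  set ρ : ℝ := max r (1/3) with hρ
  set K : ℝ := 6 / (β + 1) + 3 with hK
  have hr0 : 0 < r := Real.rpow_pos_of_pos (by norm_num) _
  have hρ0 : 0 < ρ := lt_of_lt_of_le hr0 (le_max_left _ _)
  have h13l : (1/3 : ℝ) ^ (Real.log 2 / Real.log 3) = 1/2 := by
    have hlog13 : Real.log (1/3 : ℝ) = -Real.log 3 := by rw [one_div, Real.log_inv]
    have hlog3 : Real.log 3 ≠ 0 := ne_of_gt (Real.log_pos (by norm_num))
    rw [Real.rpow_def_of_pos (by norm_num : (0:ℝ) < 1/3), hlog13,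
      show -Real.log 3 * (Real.log 2 / Real.log 3) = -Real.log 2 by field_simp,
      Real.exp_neg, Real.exp_log (by norm_num : (0:ℝ) < 2)]
    norm_num
  have hrhalf : r < 1/2 := by
    have := Real.rpow_lt_rpow_of_exponent_gt (by norm_num : (0:ℝ) < 1/3)
      (by norm_num : (1/3:ℝ) < 1) hlb
    rw [h13l] at this
    exact this
  have hρhalf : ρ < 1/2 := max_lt hrhalf (by norm_num)
  have h6pos : (0:ℝ) < 6 / (β + 1) := div_pos (by norm_num) hβ1'
  have hK0 : 0 < K := by rw [hK]; linarith
  set c : ℕ → ℝ≥0∞ := fun n => ENNReal.ofReal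
      (6 / (β + 1) * ((1/3 : ℝ) ^ (n+1)) ^ (β + 1) + 3 * (1/3 : ℝ) ^ (n+1)) with hc
  have hcK : ∀ n : ℕ, c n ≤ ENNReal.ofReal (K * ρ ^ n) := by
    intro n
    apply ENNReal.ofReal_le_ofReal
    have h_npow : (((1/3 : ℝ)) ^ (n+1)) ^ (β+1) = r ^ (n+1) := by
      rw [← Real.rpow_natCast (1/3 : ℝ) (n+1), ← Real.rpow_mul (by norm_num), mul_comm,
        Real.rpow_mul (by norm_num), Real.rpow_natCast]
    rw [h_npow]
    have hr_le : r ^ (n+1) ≤ ρ ^ (n+1) := pow_le_pow_left₀ hr0.le (le_max_left _ _) _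
    have h13 : (1/3 : ℝ) ^ (n+1) ≤ ρ ^ (n+1) := pow_le_pow_left₀ (by norm_num) (le_max_right _ _) _
    have hρn : ρ ^ (n+1) ≤ ρ ^ n := pow_le_pow_of_le_one hρ0.le (by linarith) (Nat.le_succ n)
    have h6 : (0:ℝ) ≤ 6 / (β+1) := h6pos.le
    have hρpn : (0:ℝ) ≤ ρ ^ (n+1) := by positivity
    have hρpn' : (0:ℝ) ≤ ρ ^ n := by positivity
    have hrpn : (0:ℝ) ≤ r ^ (n+1) := by positivity
    calc 6 / (β + 1) * r ^ (n+1) + 3 * (1/3 : ℝ) ^ (n+1)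
        ≤ 6 / (β + 1) * ρ ^ (n+1) + 3 * ρ ^ (n+1) := by
          have := mul_le_mul_of_nonneg_left hr_le h6
          linarith
      _ = K * ρ ^ (n+1) := by rw [hK]; ring
      _ ≤ K * ρ ^ n := mul_le_mul_of_nonneg_left hρn hK0.le
  calc (∫⁻ x in RMall α, ENNReal.ofReal (infDist x.1 cantorSet ^ γ))
      ≤ ∑' p : ℕ × ℕ, ∫⁻ x in (if p.2 < 2 ^ p.1 then RM α p.1 p.2 else ∅),
          ENNReal.ofReal (infDist x.1 cantorSet ^ γ) := by
        rw [RMall_eq]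
        exact lintegral_iUnion_le _ _
    _ ≤ ∑' p : ℕ × ℕ, (if p.2 < 2 ^ p.1 then c p.1 else 0) := by
        apply ENNReal.tsum_le_tsum
        rintro ⟨n, k⟩
        by_cases hk : k < 2 ^ n
        · simp only [if_pos hk]
          exact (slice_bound α γ n k).trans (Ink_lintegral_bound α γ β hβ hβ1 n k hk)
        · simp only [if_neg hk, Measure.restrict_empty, lintegral_zero_measure, le_refl]
    _ = ∑' n : ℕ, ∑' k : ℕ, (if k < 2 ^ n then c n else 0) := ENNReal.tsum_prod (f := fun n k => if k < 2 ^ n then c n else 0)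
    _ = ∑' n : ℕ, (2 ^ n : ℕ) * c n := by
        congr 1
        funext n
        rw [tsum_eq_sum (s := Finset.range (2 ^ n))
          (fun k hk => if_neg (by simpa using hk))]
        rw [Finset.sum_congr rfl (fun k hk => if_pos (Finset.mem_range.mp hk)),
          Finset.sum_const, Finset.card_range, nsmul_eq_mul]
    _ ≤ ∑' n : ℕ, ENNReal.ofReal (K * (2 * ρ) ^ n) := by
        apply ENNReal.tsum_le_tsum
        intro n
        calc (2 ^ n : ℕ) * c n ≤ (2 ^ n : ℕ) * ENNReal.ofReal (K * ρ ^ n) :=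
              mul_le_mul_right (hcK n) _
          _ = ENNReal.ofReal ((2:ℝ) ^ n) * ENNReal.ofReal (K * ρ ^ n) := by
              congr 1
              rw [ENNReal.ofReal_pow (by norm_num)]
              norm_num
          _ = ENNReal.ofReal ((2:ℝ) ^ n * (K * ρ ^ n)) := by
              rw [ENNReal.ofReal_mul (by positivity : (0:ℝ) ≤ (2:ℝ) ^ n)]
          _ = ENNReal.ofReal (K * (2 * ρ) ^ n) := by
              rw [mul_pow]; ring_nf
    _ = ENNReal.ofReal (∑' n : ℕ, K * (2 * ρ) ^ n) := by
        rw [ENNReal.ofReal_tsum_of_nonneg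
          (fun n => mul_nonneg hK0.le (pow_nonneg (mul_nonneg zero_le_two hρ0.le) n))
          ((summable_geometric_of_lt_one (mul_nonneg zero_le_two hρ0.le)
            (by linarith)).mul_left K)]
    _ < ⊤ := ENNReal.ofReal_lt_top

open Classical in
/-- The explicit reflection over the Cantor-cuspidal graph `Γ`. -/
def reflMap (α : ℝ) (x : ℝ × ℝ) : ℝ × ℝ :=
  if x ∈ RPall α then (x.1, -3 * x.2 + 4 * psiC α x.1)
  else if x ∈ RMall α then (x.1, -x.2 / 3 + 4 / 3 * psiC α x.1)
  else (x.1, -x.2)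

/-- For the admissible range of `p` and `q`, the integral of
`dist(x₁, C)^{(α−1)pq/(p−q)}` over `⋃_{n,k} R⁻_{n,k}` is finite. -/
theorem integral_weight_RMall_finite (α p q : ℝ)
    (hα₁ : Real.log 2 / (2 * Real.log 3) < α) (hα₂ : α < 1)
    (hp : ((1 + α) - Real.log 2 / Real.log 3) / (2 * α - Real.log 2 / Real.log 3) < p)
    (hq₁ : 1 ≤ q)
    (hq₂ : q < ((1 + α) - Real.log 2 / Real.log 3) * p /
        ((1 + α) - Real.log 2 / Real.log 3 + (1 - α) * p)) :
    (∫⁻ x in RMall α,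
        ENNReal.ofReal (infDist x.1 cantorSet ^ ((α - 1) * p * q / (p - q)))) < ⊤ := by
  have hlog2 : 0 < Real.log 2 := Real.log_pos (by norm_num)
  have hlog3 : 0 < Real.log 3 := Real.log_pos (by norm_num)
  set lam := Real.log 2 / Real.log 3 with hlam
  have hlam0 : 0 < lam := div_pos hlog2 hlog3
  have hlam1 : lam < 1 := (div_lt_one hlog3).mpr (Real.log_lt_log (by norm_num) (by norm_num))
  have hhalf : Real.log 2 / (2 * Real.log 3) = lam / 2 := by
    rw [hlam, div_div, mul_comm]
  rw [hhalf] at hα₁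
  have hα0 : 0 < α := lt_trans (by linarith) hα₁
  have h2α : lam < 2 * α := by linarith
  set L := 1 + α - lam with hL
  have hL0 : 0 < L := by rw [hL]; linarith
  have hp' : L / (2 * α - lam) < p := by
    have e1 : L = 1 + α - lam := hL
    calc L / (2 * α - lam) = (1 + α - lam) / (2 * α - lam) := by rw [← e1]
      _ < p := hp
  have hp0 : 0 < p := lt_trans (div_pos hL0 (by linarith)) hp'
  have hq0 : 0 < q := lt_of_lt_of_le one_pos hq₁
  have hden : 0 < L + (1 - α) * p := by
    have : 0 < (1 - α) * p := mul_pos (by linarith) hp0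
    linarith
  have hq2' : q * (L + (1 - α) * p) < L * p := by
    have hq₂' : q < L * p / (L + (1 - α) * p) := hq₂
    exact (lt_div_iff₀ hden).mp hq₂'
  have hkey : (1 - α) * p * q < L * (p - q) := by nlinarith
  have hpq : 0 < p - q := by
    by_contra hcon
    push_neg at hcon
    nlinarith [mul_pos (mul_pos (by linarith : (0:ℝ) < 1 - α) hp0) hq0,
      mul_nonpos_of_nonneg_of_nonpos hL0.le (by linarith : p - q ≤ 0)]
  set γ := (α - 1) * p * q / (p - q) with hγdef
  have hγ : -L < γ := by
    rw [hγdef, lt_div_iff₀ hpq]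
    nlinarith
  have hlb : lam < (γ + α) + 1 := by rw [hL] at hγ; linarith
  have hβ1 : (-1 : ℝ) < γ + α := by linarith
  exact main_bound α γ (γ + α) rfl hβ1 hlb
end
end
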